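/- Let (X,𝓔) be a ballean. If cof⋆(𝓔) ≤ add(B_X), then the ballean X is normal. Here add(B_X) is the smallest cardinality of a family of bounded subsets of X having no bounded upper bound under inclusion; for A ⊆ X, cof_*(𝓔[A]) is the smallest cardinality of a subfamily 𝒞 ⊆ 𝓔 such that for every E ∈ 𝓔 there exists C ∈ 𝒞 with E[A] \ C[A] bounded; and cof⋆(𝓔) = sup_{A ⊆ X} cof_*(𝓔[A]). -/

import Mathlib

universe u v

open Set

/-- A ballean: a set `X` with a family of entourages satisfying the three axioms. -/
structure Ballean (X : Type u) : Type u where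
  entourages : Set (Set (X × X))
  diag_mem : ∀ E ∈ entourages, ∀ x : X, (x, x) ∈ E
  comp_inv_sub : ∀ E ∈ entourages, ∀ F ∈ entourages, ∃ D ∈ entourages,
      {p : X × X | ∃ y : X, (p.1, y) ∈ E ∧ (p.2, y) ∈ F} ⊆ D
  sUnion_eq_univ : ⋃₀ entourages = Set.univ

namespace Ballean

variable {X : Type u}

/-- The ball `E[x]` of radius `E` centered at `x`. -/
def ball (E : Set (X × X)) (x : X) : Set X := {y | (x, y) ∈ E}

/-- The `E`-neighborhood `E[A]` of a set `A`. -/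
def img (E : Set (X × X)) (A : Set X) : Set X := {y | ∃ a ∈ A, (a, y) ∈ E}

/-- A subset is bounded if it is contained in some ball. -/
def IsBounded (B : Ballean X) (S : Set X) : Prop :=
  ∃ E ∈ B.entourages, ∃ x : X, S ⊆ ball E x

def Unbounded (B : Ballean X) : Prop := ¬ B.IsBounded Set.univ

/-- Two sets are asymptotically disjoint if `E[A] ∩ E[C]` is bounded for all entourages. -/
def AsympDisjoint (B : Ballean X) (A C : Set X) : Prop :=
  ∀ E ∈ B.entourages, B.IsBounded (img E A ∩ img E C)

/-- `U` is an asymptotic neighborhood of `A` if `E[A] \ U` is bounded for all entourages. -/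
def AsympNbhd (B : Ballean X) (A U : Set X) : Prop :=
  ∀ E ∈ B.entourages, B.IsBounded (img E A \ U)

/-- A ballean is normal if asymptotically disjoint sets have disjoint asymptotic
neighborhoods. -/
def Normal (B : Ballean X) : Prop :=
  ∀ A C : Set X, B.AsympDisjoint A C →
    ∃ U V : Set X, B.AsympNbhd A U ∧ B.AsympNbhd C V ∧ Disjoint U V

/-- A ballean is ultranormal if it contains no two unbounded asymptotically disjoint sets. -/
def Ultranormal (B : Ballean X) : Prop :=
  ∀ A C : Set X, B.AsympDisjoint A C → B.IsBounded A ∨ B.IsBounded C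

/-- A ballean is discrete if it is unbounded and every entourage acts trivially
outside a bounded set. -/
def Discrete (B : Ballean X) : Prop :=
  B.Unbounded ∧ ∀ E ∈ B.entourages, ∃ S : Set X, B.IsBounded S ∧
    ∀ x ∉ S, ball E x = {x}

/-- A ballean has bounded growth if there is a growth entourage `G`. -/
def BoundedGrowth (B : Ballean X) : Prop :=
  ∃ G : Set (X × X),
    (∀ S : Set X, B.IsBounded S → B.IsBounded (img G S)) ∧
    (∀ E ∈ B.entourages, ∃ S : Set X, B.IsBounded S ∧ ∀ x ∉ S, ball E x ⊆ ball G x)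

/-- The bornology of a ballean has a linearly ordered base. -/
def HasLinearBornBase (B : Ballean X) : Prop :=
  ∃ 𝒞 : Set (Set X), (∀ C ∈ 𝒞, B.IsBounded C) ∧
    (∀ C ∈ 𝒞, ∀ D ∈ 𝒞, C ⊆ D ∨ D ⊆ C) ∧
    ∀ S : Set X, B.IsBounded S → ∃ C ∈ 𝒞, S ⊆ C

/-- The additivity of the bornology: the smallest cardinality of a family of bounded
sets with no bounded upper bound. -/
noncomputable def addBorn (B : Ballean X) : Cardinal.{u} :=
  sInf {c | ∃ 𝒜 : Set (Set X), (∀ A ∈ 𝒜, B.IsBounded A) ∧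
    (¬ ∃ D : Set X, B.IsBounded D ∧ ∀ A ∈ 𝒜, A ⊆ D) ∧ c = Cardinal.mk ↥𝒜}

/-- The cofinality of the bornology: the smallest cardinality of a base of the bornology. -/
noncomputable def cofBorn (B : Ballean X) : Cardinal.{u} :=
  sInf {c | ∃ 𝒞 : Set (Set X), (∀ C ∈ 𝒞, B.IsBounded C) ∧
    (∀ S : Set X, B.IsBounded S → ∃ C ∈ 𝒞, S ⊆ C) ∧ c = Cardinal.mk ↥𝒞}

/-- The cofinality of the family of entourages. -/
noncomputable def cofEnt (B : Ballean X) : Cardinal.{u} :=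
  sInf {c | ∃ 𝒞 : Set (Set (X × X)), 𝒞 ⊆ B.entourages ∧
    (∀ E ∈ B.entourages, ∃ C ∈ 𝒞, E ⊆ C) ∧ c = Cardinal.mk ↥𝒞}

/-- A ballean is `cof`-regular if `cof(𝓔) = cof(B_X)`. -/
def CofRegular (B : Ballean X) : Prop := B.cofEnt = B.cofBorn

end Ballean

/-- The entourages of the product of two balleans. -/
def prodEnt {X Y : Type u} (BX : Ballean X) (BY : Ballean Y) :
    Set (Set ((X × Y) × (X × Y))) :=
  {E | ∃ EX ∈ BX.entourages, ∃ EY ∈ BY.entourages,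
    E = {p | (p.1.1, p.2.1) ∈ EX ∧ (p.1.2, p.2.2) ∈ EY}}

/-- The entourages of the box-product of a family of balleans. -/
def boxEnt {I : Type v} {X : I → Type u} (B : ∀ i, Ballean (X i)) :
    Set (Set ((∀ i, X i) × (∀ i, X i))) :=
  {E | ∃ F : ∀ i, Set (X i × X i), (∀ i, F i ∈ (B i).entourages) ∧
    E = {p | ∀ i, (p.1 i, p.2 i) ∈ F i}}

/-- The entourages of the `n`-th power of a ballean. -/
def powEnt {X : Type u} (B : Ballean X) (n : ℕ) :
    Set (Set ((Fin n → X) × (Fin n → X))) :=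
  {E | ∃ F : Fin n → Set (X × X), (∀ i, F i ∈ B.entourages) ∧
    E = {p | ∀ i, (p.1 i, p.2 i) ∈ F i}}

namespace Ballean

/-- `cof_*(𝓔[A])`: the smallest cardinality of a subfamily `𝒞 ⊆ 𝓔` such that for every
`E ∈ 𝓔` there is `C ∈ 𝒞` with `E[A] \ C[A]` bounded. -/
noncomputable def cofStarAt {X : Type u} (B : Ballean X) (A : Set X) : Cardinal.{u} :=
  sInf {c | ∃ 𝒞 : Set (Set (X × X)), 𝒞 ⊆ B.entourages ∧
    (∀ E ∈ B.entourages, ∃ C ∈ 𝒞, B.IsBounded (img E A \ img C A)) ∧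
    c = Cardinal.mk ↥𝒞}

/-- `cof⋆(𝓔) = sup_{A ⊆ X} cof_*(𝓔[A])`. -/
noncomputable def cofStar {X : Type u} (B : Ballean X) : Cardinal.{u} :=
  ⨆ A : Set X, B.cofStarAt A

end Ballean


namespace Ballean

variable {X : Type u}

lemma aux_inv (B : Ballean X) {E : Set (X × X)} (hE : E ∈ B.entourages) :
    ∃ D ∈ B.entourages, E ⊆ D ∧ ∀ x y : X, (x, y) ∈ E → (y, x) ∈ D := by
  obtain ⟨D, hD, hsub⟩ := B.comp_inv_sub E hE E hE
  refine ⟨D, hD, ?_, ?_⟩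
  · rintro ⟨x, y⟩ hxy
    exact hsub ⟨y, hxy, B.diag_mem E hE y⟩
  · intro x y hxy
    exact hsub ⟨y, B.diag_mem E hE y, hxy⟩

lemma aux_directed (B : Ballean X) {E F : Set (X × X)} (hE : E ∈ B.entourages)
    (hF : F ∈ B.entourages) : ∃ D ∈ B.entourages, E ⊆ D ∧ F ⊆ D := by
  obtain ⟨D₁, hD₁, hsub⟩ := B.comp_inv_sub E hE F hF
  have hE1 : E ⊆ D₁ := by
    rintro ⟨x, y⟩ hxy
    exact hsub ⟨y, hxy, B.diag_mem F hF y⟩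
  have hF1 : ∀ x y : X, (x, y) ∈ F → (y, x) ∈ D₁ := fun x y hxy =>
    hsub ⟨y, B.diag_mem E hE y, hxy⟩
  obtain ⟨D, hD, hD₁D, hDinv⟩ := B.aux_inv hD₁
  refine ⟨D, hD, hE1.trans hD₁D, ?_⟩
  rintro ⟨x, y⟩ hxy
  exact hDinv y x (hF1 x y hxy)

lemma aux_comp (B : Ballean X) {E F : Set (X × X)} (hE : E ∈ B.entourages)
    (hF : F ∈ B.entourages) :
    ∃ D ∈ B.entourages, ∀ x y z : X, (x, y) ∈ E → (y, z) ∈ F → (x, z) ∈ D := by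
  obtain ⟨F', hF', _, hFinv⟩ := B.aux_inv hF
  obtain ⟨D, hD, hsub⟩ := B.comp_inv_sub E hE F' hF'
  exact ⟨D, hD, fun x y z hxy hyz => hsub ⟨y, hxy, hFinv y z hyz⟩⟩

lemma img_mono {E F : Set (X × X)} (h : E ⊆ F) (A : Set X) : img E A ⊆ img F A := by
  rintro y ⟨a, ha, hay⟩
  exact ⟨a, ha, h hay⟩

lemma isBounded_subset (B : Ballean X) {S T : Set X} (h : S ⊆ T) (hT : B.IsBounded T) :
    B.IsBounded S := by
  obtain ⟨E, hE, x, hx⟩ := hT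
  exact ⟨E, hE, x, h.trans hx⟩

lemma isBounded_union (B : Ballean X) {S T : Set X} (hS : B.IsBounded S) (hT : B.IsBounded T) :
    B.IsBounded (S ∪ T) := by
  obtain ⟨E, hE, x, hx⟩ := hS
  obtain ⟨F, hF, y, hy⟩ := hT
  have hxy : (x, y) ∈ ⋃₀ B.entourages := by rw [B.sUnion_eq_univ]; trivial
  obtain ⟨G, hG, hxyG⟩ := hxy
  obtain ⟨D₁, hD₁, hcomp⟩ := B.aux_comp hG hF
  obtain ⟨D, hD, hED, hD₁D⟩ := B.aux_directed hE hD₁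
  refine ⟨D, hD, x, ?_⟩
  rintro z (hz | hz)
  · exact hED (hx hz)
  · exact hD₁D (hcomp x y z hxyG (hy hz))

lemma exists_bound (B : Ballean X) {ι : Type u} (f : ι → Set X)
    (hb : ∀ i, B.IsBounded (f i)) (hlt : Cardinal.mk ι < B.addBorn) :
    ∃ D : Set X, B.IsBounded D ∧ ∀ i, f i ⊆ D := by
  by_contra hcon
  push_neg at hcon
  have hmem : Cardinal.mk ↥(Set.range f) ∈ {c | ∃ 𝒜 : Set (Set X), (∀ A ∈ 𝒜, B.IsBounded A) ∧
      (¬ ∃ D : Set X, B.IsBounded D ∧ ∀ A ∈ 𝒜, A ⊆ D) ∧ c = Cardinal.mk ↥𝒜} := by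
    refine ⟨Set.range f, ?_, ?_, rfl⟩
    · rintro S ⟨i, rfl⟩
      exact hb i
    · rintro ⟨D, hD, hub⟩
      obtain ⟨i, hi⟩ := hcon D hD
      exact hi (hub _ ⟨i, rfl⟩)
  have : B.addBorn ≤ Cardinal.mk ι := (csInf_le' hmem).trans Cardinal.mk_range_le
  exact absurd hlt (not_lt.2 this)

end Ballean

/-- a ballean is normal provided `cof⋆(𝓔) ≤ add(B_X)`. -/
theorem statement0 {X : Type u} (B : Ballean X) (h : B.cofStar ≤ B.addBorn) :
    B.Normal := by
  intro A C hAC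
  by_cases hEnt : B.entourages = ∅
  · refine ⟨∅, ∅, ?_, ?_, by simp⟩ <;>
      · intro E hE
        rw [hEnt] at hE
        exact absurd hE (Set.notMem_empty E)
  obtain ⟨E₀, hE₀⟩ := Set.nonempty_iff_ne_empty.2 hEnt
  obtain ⟨-, -, x₀, -⟩ := hAC E₀ hE₀
  have hempty : B.IsBounded (∅ : Set X) := ⟨E₀, hE₀, x₀, Set.empty_subset _⟩
  have hcof : ∀ A' : Set X, B.cofStarAt A' ≤ B.addBorn := fun A' =>
    le_trans (le_ciSup (Cardinal.bddAbove_range _) A') h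
  have hattain : ∀ A' : Set X, ∃ 𝒞 : Set (Set (X × X)), 𝒞 ⊆ B.entourages ∧
      (∀ E ∈ B.entourages, ∃ Cc ∈ 𝒞, B.IsBounded (Ballean.img E A' \ Ballean.img Cc A')) ∧
      Cardinal.mk ↥𝒞 ≤ B.addBorn := by
    intro A'
    have hne : {c | ∃ 𝒞 : Set (Set (X × X)), 𝒞 ⊆ B.entourages ∧
        (∀ E ∈ B.entourages, ∃ Cc ∈ 𝒞, B.IsBounded (Ballean.img E A' \ Ballean.img Cc A')) ∧
        c = Cardinal.mk ↥𝒞}.Nonempty := by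
      refine ⟨_, B.entourages, subset_rfl, fun E hE => ⟨E, hE, ?_⟩, rfl⟩
      simpa [Set.diff_self] using hempty
    obtain ⟨𝒞, h1, h2, h3⟩ := csInf_mem hne
    refine ⟨𝒞, h1, h2, ?_⟩
    rw [← h3]
    exact hcof A'
  have h𝒮 : B.addBorn = sInf {c : Cardinal.{u} | ∃ 𝒜 : Set (Set X),
      (∀ Aa ∈ 𝒜, B.IsBounded Aa) ∧ (¬ ∃ D : Set X, B.IsBounded D ∧ ∀ Aa ∈ 𝒜, Aa ⊆ D) ∧
      c = Cardinal.mk ↥𝒜} := rfl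
  rcases Set.eq_empty_or_nonempty {c : Cardinal.{u} | ∃ 𝒜 : Set (Set X),
      (∀ Aa ∈ 𝒜, B.IsBounded Aa) ∧ (¬ ∃ D : Set X, B.IsBounded D ∧ ∀ Aa ∈ 𝒜, Aa ⊆ D) ∧
      c = Cardinal.mk ↥𝒜} with hS | hS
  · exfalso
    have hadd0 : B.addBorn = 0 := by rw [h𝒮, hS, Cardinal.sInf_empty]
    obtain ⟨𝒞, -, h2, h3⟩ := hattain ∅
    rw [hadd0] at h3
    have h0 : Cardinal.mk ↥𝒞 = 0 := le_antisymm h3 zero_le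
    have hCempty : 𝒞 = ∅ := Set.isEmpty_coe_sort.1 (Cardinal.mk_eq_zero_iff.1 h0)
    obtain ⟨Cc, hCc, -⟩ := h2 E₀ hE₀
    rw [hCempty] at hCc
    exact Set.notMem_empty Cc hCc
  have haleph : Cardinal.aleph0 ≤ B.addBorn := by
    have hsU : ∀ 𝒜 : Set (Set X), 𝒜.Finite → (∀ S ∈ 𝒜, B.IsBounded S) →
        B.IsBounded (⋃₀ 𝒜) := by
      intro 𝒜 hfin
      refine Set.Finite.induction_on
        (motive := fun 𝒜 _ => (∀ S ∈ 𝒜, B.IsBounded S) → B.IsBounded (⋃₀ 𝒜)) 𝒜 hfin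
        (fun _ => by simpa using hempty) ?_
      intro a s _ _ ih hb
      rw [Set.sUnion_insert]
      exact B.isBounded_union (hb a (Set.mem_insert _ _))
        (ih fun S hS => hb S (Set.mem_insert_of_mem _ hS))
    rw [h𝒮]
    refine le_csInf hS ?_
    rintro c ⟨𝒜, hbdd, hnub, rfl⟩
    by_contra hlt
    rw [not_le] at hlt
    have hfin : 𝒜.Finite := Cardinal.lt_aleph0_iff_set_finite.1 hlt
    exact hnub ⟨⋃₀ 𝒜, hsU 𝒜 hfin hbdd, fun Aa hAa => Set.subset_sUnion_of_mem hAa⟩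
  obtain ⟨𝒞₁, h𝒞₁s, h𝒞₁, h𝒞₁c⟩ := hattain A
  obtain ⟨𝒞₂, h𝒞₂s, h𝒞₂, h𝒞₂c⟩ := hattain C
  set 𝒟 : Set (Set (X × X)) := 𝒞₁ ∪ 𝒞₂ with h𝒟def
  have h𝒟s : 𝒟 ⊆ B.entourages := Set.union_subset h𝒞₁s h𝒞₂s
  have h𝒟c : Cardinal.mk ↥𝒟 ≤ B.addBorn := by
    calc Cardinal.mk ↥(𝒞₁ ∪ 𝒞₂) ≤ Cardinal.mk ↥𝒞₁ + Cardinal.mk ↥𝒞₂ :=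
          Cardinal.mk_union_le _ _
      _ ≤ B.addBorn + B.addBorn := add_le_add h𝒞₁c h𝒞₂c
      _ = B.addBorn := Cardinal.add_eq_self haleph
  obtain ⟨r, wo, hord⟩ := Cardinal.ord_eq ↥𝒟
  haveI := wo
  have hseg : ∀ d : ↥𝒟, Cardinal.mk ↥(insert d {d' : ↥𝒟 | r d' d}) < B.addBorn := by
    intro d
    have h2 := Cardinal.card_typein_lt (r := r) d hord
    replace h2 : Cardinal.mk ↥{d' : ↥𝒟 | r d' d} < Cardinal.mk ↥𝒟 := h2
    have h1 : Cardinal.mk ↥{d' : ↥𝒟 | r d' d} < B.addBorn := lt_of_lt_of_le h2 h𝒟c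
    calc Cardinal.mk ↥(insert d {d' : ↥𝒟 | r d' d}) ≤ Cardinal.mk ↥{d' : ↥𝒟 | r d' d} + 1 :=
          Cardinal.mk_insert_le
      _ < B.addBorn := Cardinal.add_lt_of_lt haleph h1
          (lt_of_lt_of_le Cardinal.one_lt_aleph0 haleph)
  have hA : ∀ E ∈ B.entourages, ∃ d ∈ 𝒟, B.IsBounded (Ballean.img E A \ Ballean.img d A) := by
    intro E hE
    obtain ⟨Cc, hCc, hb⟩ := h𝒞₁ E hE
    exact ⟨Cc, Or.inl hCc, hb⟩
  have hC : ∀ E ∈ B.entourages, ∃ d ∈ 𝒟, B.IsBounded (Ballean.img E C \ Ballean.img d C) := by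
    intro E hE
    obtain ⟨Cc, hCc, hb⟩ := h𝒞₂ E hE
    exact ⟨Cc, Or.inr hCc, hb⟩
  have hACs : B.AsympDisjoint C A := by
    intro E hE
    rw [Set.inter_comm]
    exact hAC E hE
  have key : ∀ A' C' : Set X, B.AsympDisjoint A' C' →
      (∀ E ∈ B.entourages, ∃ d ∈ 𝒟, B.IsBounded (Ballean.img E A' \ Ballean.img d A')) →
      B.AsympNbhd A' {x | ∃ d : ↥𝒟, x ∈ Ballean.img (↑d) A' ∧
        ∀ d' : ↥𝒟, r d' d ∨ d' = d → x ∉ Ballean.img (↑d') C'} := by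
    intro A' C' hAC' hA' E hE
    obtain ⟨d₀e, hd₀𝒟, hbd⟩ := hA' E hE
    set d₀ : ↥𝒟 := ⟨d₀e, hd₀𝒟⟩ with hd₀def
    have hbb : ∀ p : ↥(insert d₀ {d' : ↥𝒟 | r d' d₀}),
        B.IsBounded (Ballean.img (↑d₀) A' ∩ Ballean.img (↑(↑p : ↥𝒟)) C') := by
      intro p
      obtain ⟨G, hG, hG1, hG2⟩ := B.aux_directed (h𝒟s d₀.2) (h𝒟s (↑p : ↥𝒟).2)
      refine B.isBounded_subset ?_ (hAC' G hG)
      rintro x ⟨hx1, hx2⟩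
      exact ⟨Ballean.img_mono hG1 A' hx1, Ballean.img_mono hG2 C' hx2⟩
    obtain ⟨D, hDb, hDub⟩ := B.exists_bound
        (fun p : ↥(insert d₀ {d' : ↥𝒟 | r d' d₀}) =>
          Ballean.img (↑d₀) A' ∩ Ballean.img (↑(↑p : ↥𝒟)) C') hbb (hseg d₀)
    refine B.isBounded_subset ?_ (B.isBounded_union hbd hDb)
    intro x hx
    by_cases hxd : x ∈ Ballean.img (↑d₀ : Set (X × X)) A'
    · have hnot : ¬ (x ∈ Ballean.img (↑d₀ : Set (X × X)) A' ∧
          ∀ d' : ↥𝒟, r d' d₀ ∨ d' = d₀ → x ∉ Ballean.img (↑d') C') :=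
        fun hcon => hx.2 ⟨d₀, hcon⟩
      push_neg at hnot
      obtain ⟨d', hd', hxd'⟩ := hnot hxd
      have hp : d' ∈ insert d₀ {d'' : ↥𝒟 | r d'' d₀} := by
        rcases hd' with hh | hh
        · exact Set.mem_insert_of_mem _ hh
        · rw [hh]
          exact Set.mem_insert _ _
      exact Or.inr (hDub ⟨d', hp⟩ ⟨hxd, hxd'⟩)
    · exact Or.inl ⟨hx.1, hxd⟩
  refine ⟨{x | ∃ d : ↥𝒟, x ∈ Ballean.img (↑d) A ∧
      ∀ d' : ↥𝒟, r d' d ∨ d' = d → x ∉ Ballean.img (↑d') C},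
    {x | ∃ d : ↥𝒟, x ∈ Ballean.img (↑d) C ∧
      ∀ d' : ↥𝒟, r d' d ∨ d' = d → x ∉ Ballean.img (↑d') A},
    key A C hAC hA, key C A hACs hC, ?_⟩
  rw [Set.disjoint_left]
  rintro x ⟨d₁, hx1, h1⟩ ⟨d₂, hx2, h2⟩
  rcases trichotomous_of r d₁ d₂ with hlt | heq | hgt
  · exact h2 d₁ (Or.inl hlt) hx1
  · exact h2 d₁ (Or.inr heq) hx1
  · exact h1 d₂ (Or.inl hgt) hx2
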